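/- Let ε be a unitary skew-symmetric m×m matrix and let Θ := ε·C be the associated antiunitary operator on ℂ^m (C = complex conjugation), so Θ² = -1. Let Π be an orthogonal projector on ℂ^m commuting with Θ (equivalently ε·Π = Πᵗ·ε), with dim Ran Π = 2r. Then Π decomposes as an orthogonal direct sum Π = ⊕_{j=1}^r P_j of rank-2 orthogonal projectors P_j, each commuting with Θ (i.e., ε·P_j = P_jᵗ·ε). -/

import Mathlib

open Matrix

namespace St18

variable {m : ℕ}

lemma vmv_mul (a b c d : Fin m → ℂ) :
    vecMulVec a b * vecMulVec c d = (b ⬝ᵥ c) • vecMulVec a d := by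
  ext i j
  simp only [mul_apply, vecMulVec_apply, Matrix.smul_apply, smul_eq_mul, dotProduct,
    Finset.sum_mul]
  exact Finset.sum_congr rfl fun k _ => by ring

lemma mul_vmv (A : Matrix (Fin m) (Fin m) ℂ) (a b : Fin m → ℂ) :
    A * vecMulVec a b = vecMulVec (A.mulVec a) b := by
  ext i j
  simp only [mul_apply, vecMulVec_apply, mulVec, dotProduct, Finset.sum_mul]
  exact Finset.sum_congr rfl fun k _ => by ring

lemma vmv_mul_mat (a b : Fin m → ℂ) (A : Matrix (Fin m) (Fin m) ℂ) :
    vecMulVec a b * A = vecMulVec a (vecMul b A) := by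
  ext i j
  simp only [mul_apply, vecMulVec_apply, vecMul, dotProduct, Finset.mul_sum]
  exact Finset.sum_congr rfl fun k _ => by ring

lemma vmv_transpose (a b : Fin m → ℂ) : (vecMulVec a b)ᵀ = vecMulVec b a := by
  ext i j; simp [vecMulVec_apply, mul_comm]

lemma vmv_conjTranspose (a b : Fin m → ℂ) :
    (vecMulVec a b)ᴴ = vecMulVec (star b) (star a) := by
  ext i j; simp [vecMulVec_apply, conjTranspose_apply, mul_comm]

lemma vmv_neg_left (a b : Fin m → ℂ) : vecMulVec (-a) b = -vecMulVec a b := by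
  ext i j; simp [vecMulVec_apply]

lemma vmv_neg_right (a b : Fin m → ℂ) : vecMulVec a (-b) = -vecMulVec a b := by
  ext i j; simp [vecMulVec_apply]

lemma trace_vmv (a b : Fin m → ℂ) : (vecMulVec a b).trace = a ⬝ᵥ b := by
  simp [Matrix.trace, Matrix.diag, vecMulVec_apply, dotProduct]

lemma skew_quad (A : Matrix (Fin m) (Fin m) ℂ) (h : Aᵀ = -A) (x : Fin m → ℂ) :
    x ⬝ᵥ A.mulVec x = 0 := by
  have h1 : x ⬝ᵥ A.mulVec x = x ⬝ᵥ Aᵀ.mulVec x := by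
    rw [dotProduct_mulVec, mulVec_transpose, dotProduct_comm]
  rw [h, neg_mulVec, dotProduct_neg] at h1
  linear_combination h1 / 2

lemma rank_cast_eq_trace (A : Matrix (Fin m) (Fin m) ℂ) (h : A * A = A) :
    (A.rank : ℂ) = A.trace := by
  have hf : A.mulVecLin ∘ₗ A.mulVecLin = A.mulVecLin := by
    rw [← Matrix.mulVecLin_mul, h]
  have hproj : LinearMap.IsProj (LinearMap.range A.mulVecLin) A.mulVecLin := by
    refine ⟨fun x => LinearMap.mem_range_self _ x, ?_⟩
    rintro x ⟨y, rfl⟩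
    exact LinearMap.congr_fun hf y
  have htr := hproj.trace
  have h2 : LinearMap.trace ℂ _ A.mulVecLin = A.trace := by
    rw [LinearMap.trace_eq_matrix_trace ℂ (Pi.basisFun ℂ (Fin m)),
      LinearMap.toMatrix_eq_toMatrix', ← Matrix.toLin'_apply' A,
      LinearMap.toMatrix'_toLin']
  rw [Matrix.rank, ← htr, h2]

lemma eq_zero_of_rank_eq_zero {A : Matrix (Fin m) (Fin m) ℂ} (h : A.rank = 0) :
    A = 0 := by
  have h1 : LinearMap.range A.mulVecLin = ⊥ := Submodule.finrank_eq_zero.mp h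
  have h2 : A.mulVecLin = 0 := LinearMap.range_eq_bot.mp h1
  ext i j
  have h3 : A.mulVec (Pi.single j 1) = 0 := by
    rw [← Matrix.mulVecLin_apply, h2]; rfl
  have h4 := congrFun h3 i
  simpa [Matrix.mulVec_single] using h4

lemma exists_fixed_vec {A : Matrix (Fin m) (Fin m) ℂ} (h : A ≠ 0) :
    ∃ x, A.mulVec x ≠ 0 := by
  by_contra hc
  push_neg at hc
  apply h
  ext i j
  have h4 := congrFun (hc (Pi.single j 1)) i
  simpa [Matrix.mulVec_single] using h4

end St18

namespace St18

lemma main {m : ℕ} (ε : Matrix (Fin m) (Fin m) ℂ)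
    (hε : ε ∈ Matrix.unitaryGroup (Fin m) ℂ) (hskew : εᵀ = -ε) :
    ∀ r : ℕ, ∀ Pi : Matrix (Fin m) (Fin m) ℂ, Pi * Pi = Pi → Piᴴ = Pi →
      ε * Pi = Piᵀ * ε → Pi.rank = 2 * r →
      ∃ P : Fin r → Matrix (Fin m) (Fin m) ℂ,
        (∀ j, (P j)ᴴ = P j ∧ P j * P j = P j ∧ ε * P j = (P j)ᵀ * ε ∧ (P j).rank = 2) ∧
        (∀ j j', j ≠ j' → P j * P j' = 0) ∧ ∑ j, P j = Pi := by
  have hu1 : εᴴ * ε = 1 := by rw [← Matrix.star_eq_conjTranspose]; exact hε.1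
  have hu2 : ε * εᴴ = 1 := by rw [← Matrix.star_eq_conjTranspose]; exact hε.2
  have hskewH : (εᴴ)ᵀ = -εᴴ := by
    ext i j
    have h1 := congrFun (congrFun hskew j) i
    simp only [transpose_apply, Matrix.neg_apply] at h1 ⊢
    simp only [conjTranspose_apply, h1, star_neg]
  intro r
  induction r with
  | zero =>
    intro Pi hproj hsa hcomm hrank
    have h0 : Pi = 0 := eq_zero_of_rank_eq_zero (by simpa using hrank)
    exact ⟨fun j => j.elim0, fun j => j.elim0, fun j j' _ => j.elim0, by
      simp [h0]⟩
  | succ r ih =>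
    intro Pi hproj hsa hcomm hrank
    -- derived commutation with εᴴ
    have habs : ∀ B : Matrix (Fin m) (Fin m) ℂ, (Bᵀ)ᴴ = (Bᴴ)ᵀ := fun B => by
      ext i j; simp [conjTranspose_apply]
    have hPe : Pi * εᴴ = εᴴ * Piᵀ := by
      have h1 := congrArg conjTranspose hcomm
      simp only [conjTranspose_mul, hsa] at h1
      rw [habs, hsa] at h1
      exact h1
    -- find a normalized fixed vector v
    have hne : Pi ≠ 0 := by
      intro h0
      rw [h0, Matrix.rank_zero] at hrank
      omega
    obtain ⟨x, hx⟩ := exists_fixed_vec hne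
    set v₁ := Pi.mulVec x with hv₁def
    have hv₁ : Pi.mulVec v₁ = v₁ := by
      rw [hv₁def, Matrix.mulVec_mulVec, hproj]
    set t : ℝ := ∑ i, Complex.normSq (v₁ i) with htdef
    have htv : (star v₁ ⬝ᵥ v₁) = (t : ℂ) := by
      simp only [dotProduct, htdef, Pi.star_apply]
      push_cast
      exact Finset.sum_congr rfl fun i _ => by
        rw [Complex.normSq_eq_conj_mul_self]; rfl
    have ht0 : t ≠ 0 := by
      intro h0
      apply hx
      have h1 := (Finset.sum_eq_zero_iff_of_nonneg
        (fun i _ => Complex.normSq_nonneg (v₁ i))).mp h0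
      funext i
      exact Complex.normSq_eq_zero.mp (h1 i (Finset.mem_univ i))
    have htpos : 0 < t :=
      lt_of_le_of_ne (Finset.sum_nonneg fun i _ => Complex.normSq_nonneg _) (Ne.symm ht0)
    set c : ℝ := (Real.sqrt t)⁻¹ with hcdef
    set v : Fin m → ℂ := (c : ℂ) • v₁ with hvdef
    have hv : Pi.mulVec v = v := by rw [hvdef, mulVec_smul, hv₁]
    have hvv : star v ⬝ᵥ v = 1 := by
      rw [hvdef, star_smul, smul_dotProduct, dotProduct_smul, htv]
      have hcc : c * (c * t) = 1 := by
        rw [hcdef]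
        rw [show ((Real.sqrt t)⁻¹ * ((Real.sqrt t)⁻¹ * t)) =
          t / (Real.sqrt t * Real.sqrt t) by ring, Real.mul_self_sqrt htpos.le]
        exact div_self ht0
      calc star ((c:ℂ)) • ((c:ℂ) * (t:ℂ)) = ((c * (c * t) : ℝ) : ℂ) := by
            simp only [Complex.star_def, Complex.conj_ofReal, smul_eq_mul]
            push_cast
            ring
        _ = 1 := by rw [hcc]; norm_num
    -- the partner vector w = Θ' v
    set w : Fin m → ℂ := εᴴ.mulVec (star v) with hwdef
    have hPts : Piᵀ.mulVec (star v) = star v := by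
      rw [mulVec_transpose]
      conv_lhs => rw [← hsa]
      rw [← star_mulVec, hv]
    have hw : Pi.mulVec w = w := by
      rw [hwdef, Matrix.mulVec_mulVec, hPe, ← Matrix.mulVec_mulVec, hPts]
    have hεw : ε.mulVec w = star v := by
      rw [hwdef, Matrix.mulVec_mulVec, hu2, one_mulVec]
    have hstarw : star w = -(ε.mulVec v) := by
      rw [hwdef, star_mulVec, star_star, conjTranspose_conjTranspose,
        ← mulVec_transpose, hskew, neg_mulVec]
    have hvε : vecMul v ε = -(ε.mulVec v) := by
      rw [← mulVec_transpose, hskew, neg_mulVec]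
    have hwε : vecMul w ε = -(star v) := by
      rw [← mulVec_transpose, hskew, neg_mulVec, hεw]
    have hvw : star v ⬝ᵥ w = 0 := by
      rw [hwdef]; exact skew_quad εᴴ hskewH (star v)
    have hwv : star w ⬝ᵥ v = 0 := by
      rw [hstarw, neg_dotProduct, dotProduct_comm]
      rw [skew_quad ε hskew v, neg_zero]
    have hww : star w ⬝ᵥ w = 1 := by
      have h5 : star w ⬝ᵥ w = (vecMul (star w) εᴴ) ⬝ᵥ (star v) := by
        rw [hwdef, dotProduct_mulVec]
      rw [h5, hstarw, neg_vecMul, vecMul_mulVec, hskew, neg_mul, hu2,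
        vecMul_neg, vecMul_one, neg_neg, dotProduct_comm, hvv]
    -- the rank-two projector
    set P₀ : Matrix (Fin m) (Fin m) ℂ :=
      vecMulVec v (star v) + vecMulVec w (star w) with hP₀def
    have hP₀H : P₀ᴴ = P₀ := by
      rw [hP₀def, conjTranspose_add, vmv_conjTranspose, vmv_conjTranspose,
        star_star, star_star]
    have hP₀p : P₀ * P₀ = P₀ := by
      rw [hP₀def]
      simp only [add_mul, mul_add, vmv_mul, hvv, hvw, hwv, hww, one_smul,
        zero_smul, add_zero, zero_add]
    have hεP₀ : ε * P₀ = P₀ᵀ * ε := by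
      have e1 : ε * vecMulVec v (star v) = vecMulVec (ε.mulVec v) (star v) :=
        mul_vmv _ _ _
      have e2 : ε * vecMulVec w (star w) = -vecMulVec (star v) (ε.mulVec v) := by
        rw [mul_vmv, hεw, hstarw, vmv_neg_right]
      have e3 : (vecMulVec v (star v))ᵀ * ε = -vecMulVec (star v) (ε.mulVec v) := by
        rw [vmv_transpose, vmv_mul_mat, hvε, vmv_neg_right]
      have e4 : (vecMulVec w (star w))ᵀ * ε = vecMulVec (ε.mulVec v) (star v) := by
        rw [vmv_transpose, vmv_mul_mat, hwε, vmv_neg_right, hstarw,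
          vmv_neg_left, neg_neg]
      rw [hP₀def, mul_add, transpose_add, add_mul, e1, e2, e3, e4]
      abel
    have htrP₀ : P₀.trace = 2 := by
      rw [hP₀def, trace_add, trace_vmv, trace_vmv, dotProduct_comm, hvv,
        dotProduct_comm, hww]
      norm_num
    have hrankP₀ : P₀.rank = 2 := by
      have h6 := rank_cast_eq_trace P₀ hP₀p
      rw [htrP₀] at h6
      exact_mod_cast h6
    have hPiP₀ : Pi * P₀ = P₀ := by
      rw [hP₀def, mul_add, mul_vmv, mul_vmv, hv, hw]
    have hvPi : vecMul (star v) Pi = star v := by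
      conv_lhs => rw [← hsa]
      rw [← star_mulVec, hv]
    have hwPi : vecMul (star w) Pi = star w := by
      conv_lhs => rw [← hsa]
      rw [← star_mulVec, hw]
    have hP₀Pi : P₀ * Pi = P₀ := by
      rw [hP₀def, add_mul, vmv_mul_mat, vmv_mul_mat, hvPi, hwPi]
    -- the complementary projector
    set Pi' : Matrix (Fin m) (Fin m) ℂ := Pi - P₀ with hPi'def
    have hPi'p : Pi' * Pi' = Pi' := by
      rw [hPi'def, sub_mul, mul_sub, mul_sub, hproj, hPiP₀, hP₀Pi, hP₀p,
        sub_self, sub_zero]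
    have hPi'H : Pi'ᴴ = Pi' := by
      rw [hPi'def, conjTranspose_sub, hsa, hP₀H]
    have hPi'comm : ε * Pi' = Pi'ᵀ * ε := by
      rw [hPi'def, mul_sub, hcomm, hεP₀, transpose_sub, sub_mul]
    have hPi'rank : Pi'.rank = 2 * r := by
      have h6 := rank_cast_eq_trace Pi' hPi'p
      have h7 := rank_cast_eq_trace Pi hproj
      rw [hrank] at h7
      rw [hPi'def, trace_sub, ← h7, htrP₀] at h6
      have h8 : ((2 * r : ℕ) : ℂ) = ((2 * (r + 1) : ℕ) : ℂ) - 2 := by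
        push_cast; ring
      rw [← h8] at h6
      exact_mod_cast h6
    obtain ⟨Q, hQ1, hQ2, hQ3⟩ := ih Pi' hPi'p hPi'H hPi'comm hPi'rank
    have hPi'P₀ : Pi' * P₀ = 0 := by
      rw [hPi'def, sub_mul, hPiP₀, hP₀p, sub_self]
    have hP₀Pi' : P₀ * Pi' = 0 := by
      rw [hPi'def, mul_sub, hP₀Pi, hP₀p, sub_self]
    have hQfix : ∀ j, Q j * Pi' = Q j := by
      intro j
      rw [← hQ3, Finset.mul_sum]
      rw [Finset.sum_eq_single j (fun b _ hb => hQ2 j b (Ne.symm hb))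
        (fun h => absurd (Finset.mem_univ j) h)]
      exact (hQ1 j).2.1
    have hPi'Qfix : ∀ j, Pi' * Q j = Q j := by
      intro j
      rw [← hQ3, Finset.sum_mul]
      rw [Finset.sum_eq_single j (fun b _ hb => hQ2 b j hb)
        (fun h => absurd (Finset.mem_univ j) h)]
      exact (hQ1 j).2.1
    have hQP₀ : ∀ j, Q j * P₀ = 0 := fun j => by
      rw [← hQfix j, mul_assoc, hPi'P₀, mul_zero]
    have hP₀Q : ∀ j, P₀ * Q j = 0 := fun j => by
      rw [← hPi'Qfix j, ← mul_assoc, hP₀Pi', zero_mul]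
    refine ⟨Fin.cons P₀ Q, ?_, ?_, ?_⟩
    · intro j
      refine Fin.cases ?_ ?_ j
      · simp only [Fin.cons_zero]
        exact ⟨hP₀H, hP₀p, hεP₀, hrankP₀⟩
      · intro i
        simp only [Fin.cons_succ]
        exact hQ1 i
    · intro j j' hne'
      revert hne'
      refine Fin.cases ?_ ?_ j <;> [skip; intro i] <;>
        refine Fin.cases ?_ ?_ j'
      · intro h; exact absurd rfl h
      · intro i _
        simp only [Fin.cons_zero, Fin.cons_succ]
        exact hP₀Q i
      · intro _
        simp only [Fin.cons_zero, Fin.cons_succ]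
        exact hQP₀ i
      · intro i' h
        simp only [Fin.cons_succ]
        exact hQ2 i i' (fun hh => h (by rw [hh]))
    · rw [Fin.sum_cons, hQ3, hPi'def]
      abel

end St18


/-- an orthogonal projector `Pi` on `ℂ^m` of rank `2r` commuting with
the antiunitary `Θ = ε C` (equivalently `ε Pi = Piᵀ ε`, `ε` unitary skew-symmetric)
decomposes as an orthogonal sum `Pi = ⊕_{j=1}^r P_j` of rank-2 orthogonal
projectors, each commuting with `Θ`. -/
theorem statement18 {m r : ℕ} (ε Pi : Matrix (Fin m) (Fin m) ℂ)
    (hε : ε ∈ Matrix.unitaryGroup (Fin m) ℂ)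
    (hskew : εᵀ = -ε)
    (hproj : Pi * Pi = Pi)
    (hsa : Piᴴ = Pi)
    (hcomm : ε * Pi = Piᵀ * ε)
    (hrank : Pi.rank = 2 * r) :
    ∃ P : Fin r → Matrix (Fin m) (Fin m) ℂ,
      (∀ j, (P j)ᴴ = P j ∧ P j * P j = P j ∧ ε * P j = (P j)ᵀ * ε ∧
        (P j).rank = 2) ∧
      (∀ j j', j ≠ j' → P j * P j' = 0) ∧
      ∑ j, P j = Pi := by
  exact St18.main ε hε hskew r Pi hproj hsa hcomm hrank
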